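/- Let d ≥ 1, let 0 < λ ≤ Λ be constants, and let A : ℝ^{d+1} → Matrix (Fin d) (Fin d) ℝ be symmetric matrix-valued with λ|ξ|² ≤ ⟨A(t,x)ξ, ξ⟩ ≤ Λ|ξ|² for all ξ. Fix y ∈ ℝ^d, τ ∈ ℝ, r > 0, and define h(t,x) = (1 + (t-τ)/r²)^{-dλ/(2Λ)} · exp((1/(4Λ))(1 - |x-y|²/(t-τ+r²))) for t > τ. Then h satisfies the differential inequality ∂ₜh - ∑_{i,j} a^{ij}(t,x) ∂ᵢ∂ⱼh ≥ 0 for all t > τ and x ∈ ℝ^d. -/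

import Mathlib

open Real

/-- Second spatial partial derivative `∂ᵢ∂ⱼ f` at `x`. -/
noncomputable def secondPartial (d : ℕ) (f : EuclideanSpace ℝ (Fin d) → ℝ)
    (x : EuclideanSpace ℝ (Fin d)) (i j : Fin d) : ℝ :=
  fderiv ℝ (fun z => fderiv ℝ f z (EuclideanSpace.single j 1)) x
    (EuclideanSpace.single i 1)


lemma norm_sq_fderiv (d : ℕ) (y z : EuclideanSpace ℝ (Fin d)) :
    HasFDerivAt (fun z : EuclideanSpace ℝ (Fin d) => ‖z - y‖ ^ 2)
      ((2:ℕ) • innerSL ℝ (z - y)) z := by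
  exact ((hasFDerivAt_id z).sub_const y).norm_sq

lemma gauss_fderiv (d : ℕ) (K b : ℝ) (y : EuclideanSpace ℝ (Fin d)) (j : Fin d) :
    (fun z => fderiv ℝ (fun z => K * Real.exp (b * ‖z - y‖ ^ 2)) z (EuclideanSpace.single j 1))
      = fun z => (K * (2 * b)) * (Real.exp (b * ‖z - y‖ ^ 2) * (z j - y j)) := by
  funext z
  have hF : HasFDerivAt (fun z : EuclideanSpace ℝ (Fin d) => K * Real.exp (b * ‖z - y‖ ^ 2))
      (K • (Real.exp (b * ‖z - y‖ ^ 2) • (b • ((2:ℕ) • innerSL ℝ (z - y))))) z :=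
    (((norm_sq_fderiv d y z).const_mul b).exp).const_mul K
  rw [hF.fderiv]
  simp [EuclideanSpace.inner_single_right]
  ring

lemma gauss_second (d : ℕ) (K b : ℝ) (y x : EuclideanSpace ℝ (Fin d)) (i j : Fin d) :
    secondPartial d (fun z => K * Real.exp (b * ‖z - y‖ ^ 2)) x i j =
      K * Real.exp (b * ‖x - y‖ ^ 2) *
        (4 * b ^ 2 * (x i - y i) * (x j - y j) + (if i = j then 2 * b else 0)) := by
  rw [secondPartial, gauss_fderiv]
  have hE : HasFDerivAt (fun z : EuclideanSpace ℝ (Fin d) => Real.exp (b * ‖z - y‖ ^ 2))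
      (Real.exp (b * ‖x - y‖ ^ 2) • (b • ((2:ℕ) • innerSL ℝ (x - y)))) x :=
    ((norm_sq_fderiv d y x).const_mul b).exp
  have hP : HasFDerivAt (fun z : EuclideanSpace ℝ (Fin d) => z j - y j)
      (EuclideanSpace.proj j : EuclideanSpace ℝ (Fin d) →L[ℝ] ℝ) x := by
    have h0 := (EuclideanSpace.proj j : EuclideanSpace ℝ (Fin d) →L[ℝ] ℝ).hasFDerivAt (x := x)
    simpa using h0.sub_const (y j)
  have hG := (hE.mul hP).const_mul (K * (2 * b))
  rw [HasFDerivAt.fderiv (f := fun z : EuclideanSpace ℝ (Fin d) => K * (2 * b) * (Real.exp (b * ‖z - y‖ ^ 2) * (z j - y j))) hG]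
  by_cases hij : i = j
  · subst hij
    simp [EuclideanSpace.inner_single_right, EuclideanSpace.single_apply]
    ring
  · simp [EuclideanSpace.inner_single_right, EuclideanSpace.single_apply, hij,
      Ne.symm hij]
    ring

lemma time_deriv (p c u τ r t : ℝ) (hr : 0 < r) (ht : τ < t) :
    deriv (fun s => (1 + (s - τ) / r ^ 2) ^ p *
        Real.exp (c * (1 - u / (s - τ + r ^ 2)))) t =
      (1 + (t - τ) / r ^ 2) ^ p * Real.exp (c * (1 - u / (t - τ + r ^ 2))) *
        (p / (t - τ + r ^ 2) + c * u / (t - τ + r ^ 2) ^ 2) := by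
  have hr2 : (0:ℝ) < r ^ 2 := by positivity
  have hs : (0:ℝ) < t - τ + r ^ 2 := by linarith
  have hB : (0:ℝ) < 1 + (t - τ) / r ^ 2 := by
    have : 0 < (t - τ) / r ^ 2 := div_pos (by linarith) hr2
    linarith
  have h1 : HasDerivAt (fun s : ℝ => 1 + (s - τ) / r ^ 2) (1 / r ^ 2) t := by
    simpa using (((hasDerivAt_id t).sub_const τ).div_const (r ^ 2)).const_add 1
  have h2 := h1.rpow_const (p := p) (Or.inl hB.ne')
  have h3 : HasDerivAt (fun s : ℝ => s - τ + r ^ 2) 1 t := by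
    simpa using ((hasDerivAt_id t).sub_const τ).add_const (r ^ 2)
  have h4 := (hasDerivAt_const t u).div h3 hs.ne'
  have h5 := (((h4.const_sub 1).const_mul c).exp)
  have h6 := h2.mul h5
  rw [HasDerivAt.deriv (f := fun s => (1 + (s - τ) / r ^ 2) ^ p * Real.exp (c * (1 - u / (s - τ + r ^ 2)))) h6, Real.rpow_sub hB p 1, Real.rpow_one]
  simp only [Pi.div_apply]
  set S := t - τ + r ^ 2 with hS
  set E := Real.exp (c * (1 - u / S)) with hE
  set B := 1 + (t - τ) / r ^ 2 with hB'
  set P := B ^ p with hP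
  have hBeq : B = S / r ^ 2 := by
    rw [hB', hS]; field_simp; ring
  rw [hBeq]
  have hSne : S ≠ 0 := hs.ne'
  field_simp
  ring

/-- the auxiliary function `h` is a supersolution, `Ph ≥ 0`,
for `t > τ`. -/
theorem stmt_0 (d : ℕ) (hd : 1 ≤ d) (lam Lam : ℝ) (hlam : 0 < lam) (hle : lam ≤ Lam)
    (A : ℝ → EuclideanSpace ℝ (Fin d) → Matrix (Fin d) (Fin d) ℝ)
    (hsymm : ∀ t x, (A t x).IsSymm)
    (hpar : ∀ t x (ξ : EuclideanSpace ℝ (Fin d)),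
      lam * ‖ξ‖ ^ 2 ≤ ∑ i, ∑ j, A t x i j * ξ i * ξ j ∧
        ∑ i, ∑ j, A t x i j * ξ i * ξ j ≤ Lam * ‖ξ‖ ^ 2)
    (y : EuclideanSpace ℝ (Fin d)) (τ : ℝ) (r : ℝ) (hr : 0 < r)
    (h : ℝ → EuclideanSpace ℝ (Fin d) → ℝ)
    (hdef : ∀ t x, h t x =
      (1 + (t - τ) / r ^ 2) ^ (-((d : ℝ) * lam) / (2 * Lam)) *
        Real.exp ((1 / (4 * Lam)) * (1 - ‖x - y‖ ^ 2 / (t - τ + r ^ 2)))) :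
    ∀ t x, τ < t →
      deriv (fun s => h s x) t -
          ∑ i, ∑ j, A t x i j * secondPartial d (h t) x i j ≥ 0 := by
  intro t x ht
  have hLam : 0 < Lam := lt_of_lt_of_le hlam hle
  have hr2 : (0:ℝ) < r ^ 2 := by positivity
  have hs : (0:ℝ) < t - τ + r ^ 2 := by linarith
  have hB : (0:ℝ) < 1 + (t - τ) / r ^ 2 := by
    have : 0 < (t - τ) / r ^ 2 := div_pos (by linarith) hr2
    linarith
  have hKfun : h t = fun z => ((1 + (t - τ) / r ^ 2) ^ (-((d : ℝ) * lam) / (2 * Lam)) * Real.exp (1 / (4 * Lam))) * Real.exp ((-((1 / (4 * Lam)) / (t - τ + r ^ 2))) * ‖z - y‖ ^ 2) := by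
    funext z
    rw [hdef, mul_assoc, ← Real.exp_add]
    congr 1
    rw [Real.exp_eq_exp]
    field_simp
    ring
  have hfun : (fun s => h s x) = fun s : ℝ =>
      (1 + (s - τ) / r ^ 2) ^ (-((d : ℝ) * lam) / (2 * Lam)) *
        Real.exp ((1 / (4 * Lam)) * (1 - ‖x - y‖ ^ 2 / (s - τ + r ^ 2))) :=
    funext fun s => hdef s x
  have hHeq : (1 + (t - τ) / r ^ 2) ^ (-((d : ℝ) * lam) / (2 * Lam)) *
      Real.exp ((1 / (4 * Lam)) * (1 - ‖x - y‖ ^ 2 / (t - τ + r ^ 2))) = (((1 + (t - τ) / r ^ 2) ^ (-((d : ℝ) * lam) / (2 * Lam)) * Real.exp (1 / (4 * Lam))) * Real.exp ((-((1 / (4 * Lam)) / (t - τ + r ^ 2))) * ‖x - y‖ ^ 2)) := by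
    rw [mul_assoc, ← Real.exp_add]
    congr 1
    rw [Real.exp_eq_exp]
    field_simp
    ring
  have hderiv : deriv (fun s => h s x) t =
      (((1 + (t - τ) / r ^ 2) ^ (-((d : ℝ) * lam) / (2 * Lam)) * Real.exp (1 / (4 * Lam))) * Real.exp ((-((1 / (4 * Lam)) / (t - τ + r ^ 2))) * ‖x - y‖ ^ 2)) * ((-((d : ℝ) * lam) / (2 * Lam)) / (t - τ + r ^ 2) + (1 / (4 * Lam)) * (‖x - y‖ ^ 2) / (t - τ + r ^ 2) ^ 2) := by
    rw [hfun, time_deriv (-((d : ℝ) * lam) / (2 * Lam)) (1 / (4 * Lam)) (‖x - y‖ ^ 2) τ r t hr ht, hHeq]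
  have hsp : ∀ i j, secondPartial d (h t) x i j =
      (((1 + (t - τ) / r ^ 2) ^ (-((d : ℝ) * lam) / (2 * Lam)) * Real.exp (1 / (4 * Lam))) * Real.exp ((-((1 / (4 * Lam)) / (t - τ + r ^ 2))) * ‖x - y‖ ^ 2)) * (4 * (-((1 / (4 * Lam)) / (t - τ + r ^ 2))) ^ 2 * (x i - y i) * (x j - y j) +
        (if i = j then 2 * (-((1 / (4 * Lam)) / (t - τ + r ^ 2))) else 0)) := by
    intro i j
    rw [hKfun]
    exact gauss_second d ((1 + (t - τ) / r ^ 2) ^ (-((d : ℝ) * lam) / (2 * Lam)) * Real.exp (1 / (4 * Lam))) (-((1 / (4 * Lam)) / (t - τ + r ^ 2))) y x i j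
  have hsub : ∀ k : Fin d, (x - y) k = x k - y k := fun k => rfl
  have hsum : ∑ i, ∑ j, A t x i j * secondPartial d (h t) x i j =
      (((1 + (t - τ) / r ^ 2) ^ (-((d : ℝ) * lam) / (2 * Lam)) * Real.exp (1 / (4 * Lam))) * Real.exp ((-((1 / (4 * Lam)) / (t - τ + r ^ 2))) * ‖x - y‖ ^ 2)) * (4 * (-((1 / (4 * Lam)) / (t - τ + r ^ 2))) ^ 2) * (∑ i, ∑ j, A t x i j * (x - y) i * (x - y) j) + (((1 + (t - τ) / r ^ 2) ^ (-((d : ℝ) * lam) / (2 * Lam)) * Real.exp (1 / (4 * Lam))) * Real.exp ((-((1 / (4 * Lam)) / (t - τ + r ^ 2))) * ‖x - y‖ ^ 2)) * (2 * (-((1 / (4 * Lam)) / (t - τ + r ^ 2)))) * (∑ i, A t x i i) := by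
    have e1 : ∀ i j, A t x i j * secondPartial d (h t) x i j =
        (((1 + (t - τ) / r ^ 2) ^ (-((d : ℝ) * lam) / (2 * Lam)) * Real.exp (1 / (4 * Lam))) * Real.exp ((-((1 / (4 * Lam)) / (t - τ + r ^ 2))) * ‖x - y‖ ^ 2)) * (4 * (-((1 / (4 * Lam)) / (t - τ + r ^ 2))) ^ 2) * (A t x i j * (x - y) i * (x - y) j) +
          (((1 + (t - τ) / r ^ 2) ^ (-((d : ℝ) * lam) / (2 * Lam)) * Real.exp (1 / (4 * Lam))) * Real.exp ((-((1 / (4 * Lam)) / (t - τ + r ^ 2))) * ‖x - y‖ ^ 2)) * (2 * (-((1 / (4 * Lam)) / (t - τ + r ^ 2)))) * (if i = j then A t x i j else 0) := by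
      intro i j
      rw [hsp i j]
      by_cases hij : i = j
      · subst hij; simp [hsub]; ring
      · simp [hij, hsub]; ring
    simp_rw [e1, Finset.sum_add_distrib, ← Finset.mul_sum, Finset.sum_ite_eq,
      Finset.mem_univ, if_true]
  have hQ : (∑ i, ∑ j, A t x i j * (x - y) i * (x - y) j) ≤ Lam * (‖x - y‖ ^ 2) := (hpar t x (x - y)).2
  have hTi : ∀ i, lam ≤ A t x i i := by
    intro i
    have h0 := (hpar t x (EuclideanSpace.single i 1)).1
    simpa [EuclideanSpace.single_apply, mul_ite, ite_mul, Finset.sum_ite_eq,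
      Finset.sum_ite_eq'] using h0
  have hT : (d : ℝ) * lam ≤ (∑ i, A t x i i) := by
    have h0 : ∑ _i : Fin d, lam ≤ (∑ i, A t x i i) := Finset.sum_le_sum fun i _ => hTi i
    simpa [Finset.sum_const, Finset.card_univ, Fintype.card_fin, nsmul_eq_mul] using h0
  have hH : 0 < (((1 + (t - τ) / r ^ 2) ^ (-((d : ℝ) * lam) / (2 * Lam)) * Real.exp (1 / (4 * Lam))) * Real.exp ((-((1 / (4 * Lam)) / (t - τ + r ^ 2))) * ‖x - y‖ ^ 2)) :=
    mul_pos (mul_pos (Real.rpow_pos_of_pos hB _) (Real.exp_pos _)) (Real.exp_pos _)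
  have key : 0 ≤ (-((d : ℝ) * lam) / (2 * Lam)) / (t - τ + r ^ 2) + (1 / (4 * Lam)) * (‖x - y‖ ^ 2) / (t - τ + r ^ 2) ^ 2 -
      (4 * (-((1 / (4 * Lam)) / (t - τ + r ^ 2))) ^ 2 * (∑ i, ∑ j, A t x i j * (x - y) i * (x - y) j) + 2 * (-((1 / (4 * Lam)) / (t - τ + r ^ 2))) * (∑ i, A t x i i)) := by
    have e : (-((d : ℝ) * lam) / (2 * Lam)) / (t - τ + r ^ 2) + (1 / (4 * Lam)) * (‖x - y‖ ^ 2) / (t - τ + r ^ 2) ^ 2 -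
        (4 * (-((1 / (4 * Lam)) / (t - τ + r ^ 2))) ^ 2 * (∑ i, ∑ j, A t x i j * (x - y) i * (x - y) j) + 2 * (-((1 / (4 * Lam)) / (t - τ + r ^ 2))) * (∑ i, A t x i i)) =
        (1 / (4 * Lam ^ 2 * (t - τ + r ^ 2) ^ 2)) * (Lam * (‖x - y‖ ^ 2) - (∑ i, ∑ j, A t x i j * (x - y) i * (x - y) j)) +
          (1 / (2 * Lam * (t - τ + r ^ 2))) * ((∑ i, A t x i i) - (d : ℝ) * lam) := by
      field_simp
      ring
    rw [e]
    have n1 : 0 ≤ (1 / (4 * Lam ^ 2 * (t - τ + r ^ 2) ^ 2)) * (Lam * (‖x - y‖ ^ 2) - (∑ i, ∑ j, A t x i j * (x - y) i * (x - y) j)) :=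
      mul_nonneg (by positivity) (by linarith)
    have n2 : 0 ≤ (1 / (2 * Lam * (t - τ + r ^ 2))) * ((∑ i, A t x i i) - (d : ℝ) * lam) :=
      mul_nonneg (by positivity) (by linarith)
    linarith
  rw [hderiv, hsum]
  have expand : (((1 + (t - τ) / r ^ 2) ^ (-((d : ℝ) * lam) / (2 * Lam)) * Real.exp (1 / (4 * Lam))) * Real.exp ((-((1 / (4 * Lam)) / (t - τ + r ^ 2))) * ‖x - y‖ ^ 2)) * ((-((d : ℝ) * lam) / (2 * Lam)) / (t - τ + r ^ 2) + (1 / (4 * Lam)) * (‖x - y‖ ^ 2) / (t - τ + r ^ 2) ^ 2) -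
      ((((1 + (t - τ) / r ^ 2) ^ (-((d : ℝ) * lam) / (2 * Lam)) * Real.exp (1 / (4 * Lam))) * Real.exp ((-((1 / (4 * Lam)) / (t - τ + r ^ 2))) * ‖x - y‖ ^ 2)) * (4 * (-((1 / (4 * Lam)) / (t - τ + r ^ 2))) ^ 2) * (∑ i, ∑ j, A t x i j * (x - y) i * (x - y) j) + (((1 + (t - τ) / r ^ 2) ^ (-((d : ℝ) * lam) / (2 * Lam)) * Real.exp (1 / (4 * Lam))) * Real.exp ((-((1 / (4 * Lam)) / (t - τ + r ^ 2))) * ‖x - y‖ ^ 2)) * (2 * (-((1 / (4 * Lam)) / (t - τ + r ^ 2)))) * (∑ i, A t x i i)) =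
      (((1 + (t - τ) / r ^ 2) ^ (-((d : ℝ) * lam) / (2 * Lam)) * Real.exp (1 / (4 * Lam))) * Real.exp ((-((1 / (4 * Lam)) / (t - τ + r ^ 2))) * ‖x - y‖ ^ 2)) * ((-((d : ℝ) * lam) / (2 * Lam)) / (t - τ + r ^ 2) + (1 / (4 * Lam)) * (‖x - y‖ ^ 2) / (t - τ + r ^ 2) ^ 2 -
        (4 * (-((1 / (4 * Lam)) / (t - τ + r ^ 2))) ^ 2 * (∑ i, ∑ j, A t x i j * (x - y) i * (x - y) j) + 2 * (-((1 / (4 * Lam)) / (t - τ + r ^ 2))) * (∑ i, A t x i i))) := by ring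
  rw [ge_iff_le, expand]
  exact mul_nonneg hH.le key
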